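/- Any collection of n circular arcs with maximum agreement number M and minimum agreement number m has at most (m/2)(2M − m − 1) doubly intersecting pairs of arcs, i.e., d ≤ m(M−1) − C(m,2). -/

import Mathlib

open scoped Classical

/-- The circle is parametrized by the half-open interval `[0,1)`.  `memArc x y p`
says that the point `p` lies on the closed arc going clockwise from `x` to `y`
(wrapping around the circle when `y` precedes `x`). -/
def memArc (x y p : ℝ) : Prop :=
  if x ≤ y then x ≤ p ∧ p ≤ y else x ≤ p ∨ p ≤ y

/-- A circular arc, given by its left endpoint `x` and right endpoint `y`;
the arc runs clockwise from `x` to `y`. -/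
structure Arc where
  x : ℝ
  y : ℝ

/-- Both endpoints of the arc lie on the circle `[0,1)`. -/
def Arc.InCircle (A : Arc) : Prop :=
  A.x ∈ Set.Ico (0 : ℝ) 1 ∧ A.y ∈ Set.Ico (0 : ℝ) 1

/-- The point `p` lies on the arc `A`. -/
def Arc.Mem (A : Arc) (p : ℝ) : Prop := memArc A.x A.y p

/-- Two arcs intersect: some point of the circle lies on both. -/
def Intersects (A B : Arc) : Prop :=
  ∃ p ∈ Set.Ico (0 : ℝ) 1, A.Mem p ∧ B.Mem p

/-- Two arcs doubly intersect: each arc contains both endpoints of the other. -/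
def DoublyIntersects (A B : Arc) : Prop :=
  A.Mem B.x ∧ A.Mem B.y ∧ B.Mem A.x ∧ B.Mem A.y

/-- The agreement number of a point `p`: the number of arcs of the family containing it. -/
noncomputable def agree {n : ℕ} (A : Fin n → Arc) (p : ℝ) : ℕ :=
  (Finset.univ.filter fun i => (A i).Mem p).card

/-- `M` is the maximum agreement number of the family. -/
def IsMaxAgreement {n : ℕ} (A : Fin n → Arc) (M : ℕ) : Prop :=
  (∀ p ∈ Set.Ico (0 : ℝ) 1, agree A p ≤ M) ∧ ∃ p ∈ Set.Ico (0 : ℝ) 1, agree A p = M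

/-- `m` is the minimum agreement number of the family. -/
def IsMinAgreement {n : ℕ} (A : Fin n → Arc) (m : ℕ) : Prop :=
  (∀ p ∈ Set.Ico (0 : ℝ) 1, m ≤ agree A p) ∧ ∃ p ∈ Set.Ico (0 : ℝ) 1, agree A p = m

/-- All `2n` endpoints of the family are pairwise distinct. -/
def DistinctEndpoints {n : ℕ} (A : Fin n → Arc) : Prop :=
  Function.Injective fun q : Fin n × Bool => if q.2 then (A q.1).x else (A q.1).y

/-- Number of intersecting (unordered) pairs of arcs: the edge count of the
intersection graph. -/
noncomputable def edgeCount {n : ℕ} (A : Fin n → Arc) : ℕ :=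
  (Finset.univ.filter fun q : Fin n × Fin n =>
    q.1 < q.2 ∧ Intersects (A q.1) (A q.2)).card

/-- Number of doubly intersecting (unordered) pairs of arcs. -/
noncomputable def doubleCount {n : ℕ} (A : Fin n → Arc) : ℕ :=
  (Finset.univ.filter fun q : Fin n × Fin n =>
    q.1 < q.2 ∧ DoublyIntersects (A q.1) (A q.2)).card

/-- The running count at the point `q`: the number of arcs covering points
immediately clockwise of `q` (for an endpoint `q` of the family, an arc covers
points just clockwise of `q` iff `q` lies on the arc and `q` is not its right
endpoint, since all endpoints are distinct). -/
noncomputable def countAfter {n : ℕ} (A : Fin n → Arc) (q : ℝ) : ℕ :=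
  (Finset.univ.filter fun i => (A i).Mem q ∧ q ≠ (A i).y).card

/-- The running count sum: the sum of the running counts over all `2n` endpoints. -/
noncomputable def runningCountSum {n : ℕ} (A : Fin n → Arc) : ℕ :=
  ∑ i : Fin n, (countAfter A (A i).x + countAfter A (A i).y)

section AuxLemmas

lemma memArc_self_right (x y : ℝ) : memArc x y y := by
  unfold memArc
  split_ifs with h
  · exact ⟨h, le_rfl⟩
  · exact Or.inr le_rfl

lemma Arc.mem_self_right (A : Arc) : A.Mem A.y := memArc_self_right _ _

/-- If two arcs share a point, one contains the other's right endpoint. -/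
lemma mem_y_or {A B : Arc} {p : ℝ} (hA : A.Mem p) (hB : B.Mem p) :
    B.Mem A.y ∨ A.Mem B.y := by
  unfold Arc.Mem memArc at *
  by_cases hu : A.x ≤ A.y <;> by_cases hv : B.x ≤ B.y
  · rw [if_pos hu] at hA
    rw [if_pos hv] at hB
    rw [if_pos hv, if_pos hu]
    rcases le_total A.y B.y with h | h
    · exact Or.inl ⟨by linarith [hA.2, hB.1], h⟩
    · exact Or.inr ⟨by linarith [hA.1, hB.2], h⟩
  · rw [if_pos hu] at hA
    rw [if_neg hv] at hB
    rw [if_neg hv, if_pos hu]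
    rcases hB with h | h
    · exact Or.inl (Or.inl (by linarith [hA.2]))
    · rcases le_total A.y B.y with h' | h'
      · exact Or.inl (Or.inr h')
      · exact Or.inr ⟨by linarith [hA.1], h'⟩
  · rw [if_neg hu] at hA
    rw [if_pos hv] at hB
    rw [if_pos hv, if_neg hu]
    rcases hA with h | h
    · exact Or.inr (Or.inl (by linarith [hB.2]))
    · rcases le_total B.y A.y with h' | h'
      · exact Or.inr (Or.inr h')
      · exact Or.inl ⟨by linarith [hB.1], h'⟩
  · rw [if_neg hu] at hA
    rw [if_neg hv] at hB
    rw [if_neg hv, if_neg hu]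
    rcases le_total A.y B.y with h | h
    · exact Or.inl (Or.inr h)
    · exact Or.inr (Or.inr h)

/-- A doubly intersecting pair of arcs (with distinct left endpoints) covers
every point. -/
lemma doubly_cover {A B : Arc} (h : DoublyIntersects A B) (hx : A.x ≠ B.x)
    (p : ℝ) : A.Mem p ∨ B.Mem p := by
  obtain ⟨h1, h2, h3, h4⟩ := h
  unfold Arc.Mem memArc at *
  by_cases hu : A.x ≤ A.y <;> by_cases hv : B.x ≤ B.y
  · rw [if_pos hu] at h1 h2
    rw [if_pos hv] at h3 h4
    exact absurd (le_antisymm h3.1 h1.1) (Ne.symm hx)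
  · rw [if_pos hu] at h1 h2
    rw [if_neg hv] at h3 h4
    rw [if_pos hu, if_neg hv]
    by_cases hcp : B.x ≤ p
    · exact Or.inr (Or.inl hcp)
    by_cases hpd : p ≤ B.y
    · exact Or.inr (Or.inr hpd)
    · exact Or.inl ⟨by linarith [h2.1], by linarith [h1.2]⟩
  · rw [if_neg hu] at h1 h2
    rw [if_pos hv] at h3 h4
    rw [if_neg hu, if_pos hv]
    by_cases hap : A.x ≤ p
    · exact Or.inl (Or.inl hap)
    by_cases hpb : p ≤ A.y
    · exact Or.inl (Or.inr hpb)
    · exact Or.inr ⟨by linarith [h4.1], by linarith [h3.2]⟩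
  · rw [if_neg hu] at h1 h2
    rw [if_neg hv] at h3 h4
    rw [if_neg hu, if_neg hv]
    by_cases hap : A.x ≤ p
    · exact Or.inl (Or.inl hap)
    by_cases hpb : p ≤ A.y
    · exact Or.inl (Or.inr hpb)
    by_cases hcp : B.x ≤ p
    · exact Or.inr (Or.inl hcp)
    by_cases hpd : p ≤ B.y
    · exact Or.inr (Or.inr hpd)
    · rcases h1 with h | h
      · rcases h3 with h' | h'
        · exact absurd (le_antisymm h h') hx
        · exfalso; push_neg at hap hpd; linarith
      · exfalso; push_neg at hpb hcp; linarith

end AuxLemmas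

/-- Theorem 6.1 (`d_max`): a family of `n` circular arcs with maximum agreement
number `M` and minimum agreement number `m` has at most
`(m/2)(2M - m - 1) = m(M-1) - C(m,2)` doubly intersecting pairs. -/
theorem double_count_upper_bound {n : ℕ} (A : Fin n → Arc)
    (hin : ∀ i, (A i).InCircle) (hdist : DistinctEndpoints A) (M m : ℕ)
    (hM : IsMaxAgreement A M) (hm : IsMinAgreement A m) :
    (doubleCount A : ℤ) ≤ m * ((M : ℤ) - 1) - m.choose 2 := by
  classical
  obtain ⟨p0, hp0, hp0m⟩ := hm.2
  -- the set of arcs containing the minimum point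
  set S : Finset (Fin n) := Finset.univ.filter (fun i => (A i).Mem p0) with hSdef
  have hSmem : ∀ i : Fin n, i ∈ S ↔ (A i).Mem p0 := by
    intro i; simp [hSdef]
  have hScard : S.card = m := hp0m
  -- the counting set
  set T : Finset (Fin n × Fin n) := Finset.univ.filter
    (fun q => q.1 ∈ S ∧ q.2 ≠ q.1 ∧ (A q.2).Mem (A q.1).y) with hTdef
  have hTmem : ∀ u v : Fin n, u ∈ S → v ≠ u → (A v).Mem (A u).y → (u, v) ∈ T := by
    intro u v h1 h2 h3
    simp only [hTdef, Finset.mem_filter, Finset.mem_univ, true_and]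
    exact ⟨h1, h2, h3⟩
  -- upper bound : T.card ≤ m * (M - 1)
  have hTfst : ∀ q ∈ T, q.1 ∈ S := by
    intro q hq
    exact ((Finset.mem_filter.mp hq).2).1
  have hcardT : T.card = ∑ i ∈ S, (T.filter fun q => q.1 = i).card :=
    Finset.card_eq_sum_card_fiberwise hTfst
  have hfib : ∀ i ∈ S, ((T.filter fun q => q.1 = i).card : ℤ) ≤ (M : ℤ) - 1 := by
    intro i hi
    have hmemy : i ∈ Finset.univ.filter fun j => (A j).Mem (A i).y := by
      simp only [Finset.mem_filter, Finset.mem_univ, true_and]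
      exact Arc.mem_self_right _
    have h0 : (T.filter fun q => q.1 = i).card ≤
        ((Finset.univ.filter fun j => (A j).Mem (A i).y).erase i).card := by
      apply Finset.card_le_card_of_injOn (fun q => q.2)
      · rintro ⟨u, v⟩ hq
        simp only [Finset.mem_coe, hTdef, Finset.mem_filter, Finset.mem_univ, true_and] at hq
        obtain ⟨⟨hu, hvu, hmem⟩, hui⟩ := hq
        subst hui
        simp only [Finset.mem_coe, Finset.mem_erase, Finset.mem_filter, Finset.mem_univ, true_and]
        exact ⟨hvu, hmem⟩
      · rintro ⟨u, v⟩ hq ⟨u', v'⟩ hq' h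
        simp only [Finset.coe_filter, Set.mem_setOf_eq] at hq hq'
        rw [Prod.mk.injEq]
        exact ⟨hq.2.trans hq'.2.symm, h⟩
    have h1 : ((Finset.univ.filter fun j => (A j).Mem (A i).y).erase i).card
        = agree A (A i).y - 1 := by
      rw [Finset.card_erase_of_mem hmemy]; rfl
    have h2 : 1 ≤ agree A (A i).y := by
      have : 0 < (Finset.univ.filter fun j => (A j).Mem (A i).y).card :=
        Finset.card_pos.mpr ⟨i, hmemy⟩
      exact this
    have h3 : agree A (A i).y ≤ M := hM.1 _ ((hin i).2)
    have h4 : (T.filter fun q => q.1 = i).card ≤ agree A (A i).y - 1 := h0.trans h1.le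
    have h5 : ((T.filter fun q => q.1 = i).card : ℤ) ≤ (agree A (A i).y : ℤ) - 1 := by
      have := (Nat.cast_le (α := ℤ)).mpr h4
      rwa [Nat.cast_sub h2] at this
    have h6 : (agree A (A i).y : ℤ) ≤ (M : ℤ) := by exact_mod_cast h3
    linarith
  have hTle : (T.card : ℤ) ≤ (m : ℤ) * ((M : ℤ) - 1) := by
    rw [hcardT]
    push_cast
    calc ∑ i ∈ S, ((T.filter fun q => q.1 = i).card : ℤ)
        ≤ ∑ _i ∈ S, ((M : ℤ) - 1) := Finset.sum_le_sum hfib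
      _ = (m : ℤ) * ((M : ℤ) - 1) := by
          rw [Finset.sum_const, hScard, nsmul_eq_mul]
  -- lower bound : doubleCount A + m.choose 2 ≤ T.card
  set D : Finset (Fin n × Fin n) := Finset.univ.filter
    (fun q => q.1 < q.2 ∧ DoublyIntersects (A q.1) (A q.2)) with hDdef
  have hDcard : D.card = doubleCount A := rfl
  set SP : Finset (Fin n × Fin n) := Finset.univ.filter
    (fun q => q.1 < q.2 ∧ q.1 ∈ S ∧ q.2 ∈ S) with hSPdef
  have hSPcard : SP.card = m.choose 2 := by
    rw [← hScard, ← Finset.card_powersetCard]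
    apply Finset.card_bij (fun q _ => ({q.1, q.2} : Finset (Fin n)))
    · rintro ⟨u, v⟩ hq
      simp only [hSPdef, Finset.mem_filter, Finset.mem_univ, true_and] at hq
      obtain ⟨hlt, h1, h2⟩ := hq
      rw [Finset.mem_powersetCard]
      constructor
      · intro x hx
        simp only [Finset.mem_insert, Finset.mem_singleton] at hx
        rcases hx with rfl | rfl <;> assumption
      · exact Finset.card_pair (ne_of_lt hlt)
    · rintro ⟨u, v⟩ hq ⟨u', v'⟩ hq' h
      simp only [hSPdef, Finset.mem_filter, Finset.mem_univ, true_and] at hq hq'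
      have e1 : u = u' ∨ u = v' := by
        have : u ∈ ({u', v'} : Finset (Fin n)) := by rw [← h]; simp
        simpa using this
      have e2 : v = u' ∨ v = v' := by
        have : v ∈ ({u', v'} : Finset (Fin n)) := by rw [← h]; simp
        simpa using this
      have e3 : u' = u ∨ u' = v := by
        have : u' ∈ ({u, v} : Finset (Fin n)) := by rw [h]; simp
        simpa using this
      rcases e1 with rfl | rfl
      · rcases e2 with rfl | rfl
        · exact absurd hq.1 (lt_irrefl _)
        · rfl
      · rcases e3 with rfl | rfl
        · exact absurd hq'.1 (lt_irrefl _)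
        · exact absurd (hq.1.trans hq'.1) (lt_irrefl _)
    · intro t ht
      rw [Finset.mem_powersetCard] at ht
      obtain ⟨hsub, hcard⟩ := ht
      obtain ⟨a, b, hab, rfl⟩ := Finset.card_eq_two.mp hcard
      have haS : a ∈ S := hsub (by simp)
      have hbS : b ∈ S := hsub (by simp)
      rcases hab.lt_or_gt with h | h
      · refine ⟨(a, b), ?_, rfl⟩
        simp only [hSPdef, Finset.mem_filter, Finset.mem_univ, true_and]
        exact ⟨h, haS, hbS⟩
      · refine ⟨(b, a), ?_, by rw [Finset.pair_comm]⟩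
        simp only [hSPdef, Finset.mem_filter, Finset.mem_univ, true_and]
        exact ⟨h, hbS, haS⟩
  -- the disjoint union of D and SP
  set E : Finset ((Fin n × Fin n) × Bool) :=
    (D ×ˢ ({true} : Finset Bool)) ∪ (SP ×ˢ ({false} : Finset Bool)) with hEdef
  have hEcard : E.card = D.card + SP.card := by
    rw [hEdef, Finset.card_union_of_disjoint]
    · simp [Finset.card_product]
    rw [Finset.disjoint_left]
    rintro ⟨q, b⟩ h1 h2
    simp only [Finset.mem_product, Finset.mem_singleton] at h1 h2
    rw [h1.2] at h2
    exact absurd h2.2 (by simp)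
  have hxne : ∀ i j : Fin n, i ≠ j → (A i).x ≠ (A j).x := by
    intro i j hij h
    have := hdist (a₁ := (i, true)) (a₂ := (j, true)) (by simpa using h)
    exact hij (by simpa using this)
  -- the injection
  set F : (Fin n × Fin n) × Bool → Fin n × Fin n := fun e =>
    match e with
    | ((i, j), true) => if j ∈ S then (j, i) else (i, j)
    | ((i, j), false) => if (A j).Mem (A i).y then (i, j) else (j, i) with hFdef
  have hEmemT : ∀ i j : Fin n, (((i, j), true) ∈ E) → (i, j) ∈ D := by
    intro i j he
    simp only [hEdef, Finset.mem_union, Finset.mem_product, Finset.mem_singleton] at he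
    rcases he with ⟨h, -⟩ | ⟨-, h⟩
    · exact h
    · exact absurd h (by simp)
  have hEmemF : ∀ i j : Fin n, (((i, j), false) ∈ E) → (i, j) ∈ SP := by
    intro i j he
    simp only [hEdef, Finset.mem_union, Finset.mem_product, Finset.mem_singleton] at he
    rcases he with ⟨-, h⟩ | ⟨h, -⟩
    · exact absurd h (by simp)
    · exact h
  have hmaps : ∀ e ∈ E, F e ∈ T := by
    rintro ⟨⟨i, j⟩, b⟩ he
    cases b
    · -- SP element
      obtain ⟨hlt, hiS, hjS⟩ := Finset.mem_filter.mp (hEmemF i j he) |>.2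
      by_cases hmem : (A j).Mem (A i).y
      · have : F ((i, j), false) = (i, j) := by simp [hFdef, hmem]
        rw [this]
        exact hTmem i j hiS (ne_of_lt hlt).symm hmem
      · have : F ((i, j), false) = (j, i) := by simp [hFdef, hmem]
        rw [this]
        have hor := mem_y_or ((hSmem i).mp hiS) ((hSmem j).mp hjS)
        rcases hor with h | h
        · exact absurd h hmem
        · exact hTmem j i hjS (ne_of_lt hlt) h
    · -- D element
      obtain ⟨hlt, hd⟩ := Finset.mem_filter.mp (hEmemT i j he) |>.2
      obtain ⟨hd1, hd2, hd3, hd4⟩ := hd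
      by_cases hjS : j ∈ S
      · have : F ((i, j), true) = (j, i) := by simp [hFdef, hjS]
        rw [this]
        exact hTmem j i hjS (ne_of_lt hlt) hd2
      · have : F ((i, j), true) = (i, j) := by simp [hFdef, hjS]
        rw [this]
        have hcov := doubly_cover ⟨hd1, hd2, hd3, hd4⟩
          (hxne i j (ne_of_lt hlt)) p0
        have hiS : i ∈ S := by
          rcases hcov with h | h
          · exact (hSmem i).mpr h
          · exact absurd ((hSmem j).mpr h) hjS
        exact hTmem i j hiS (ne_of_lt hlt).symm hd4
  have hkey : ∀ e ∈ E, (e.1.1 < e.1.2) ∧ (F e = e.1 ∨ F e = (e.1.2, e.1.1)) := by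
    rintro ⟨⟨i, j⟩, b⟩ he
    cases b
    · obtain ⟨hlt, -⟩ := Finset.mem_filter.mp (hEmemF i j he) |>.2
      refine ⟨hlt, ?_⟩
      simp only [hFdef]
      split_ifs <;> simp
    · obtain ⟨hlt, -⟩ := Finset.mem_filter.mp (hEmemT i j he) |>.2
      refine ⟨hlt, ?_⟩
      simp only [hFdef]
      split_ifs <;> simp
  have hinj : ∀ e₁ ∈ E, ∀ e₂ ∈ E, F e₁ = F e₂ → e₁ = e₂ := by
    rintro ⟨⟨i, j⟩, b⟩ h1 ⟨⟨k, l⟩, c⟩ h2 heq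
    obtain ⟨hlt1, hv1⟩ := hkey _ h1
    obtain ⟨hlt2, hv2⟩ := hkey _ h2
    replace hlt1 : i < j := hlt1
    replace hlt2 : k < l := hlt2
    have hpair : i = k ∧ j = l := by
      rcases hv1 with h | h <;> rcases hv2 with h' | h' <;> rw [h, h'] at heq
      · exact ⟨congrArg Prod.fst heq, congrArg Prod.snd heq⟩
      · have ha : i = l := congrArg Prod.fst heq
        have hb : j = k := congrArg Prod.snd heq
        exact absurd ((hlt1.trans_eq hb).trans (hlt2.trans_eq ha.symm)) (lt_irrefl _)
      · have ha : j = k := congrArg Prod.fst heq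
        have hb : i = l := congrArg Prod.snd heq
        exact absurd ((hlt1.trans_eq ha).trans (hlt2.trans_eq hb.symm)) (lt_irrefl _)
      · exact ⟨congrArg Prod.snd heq, congrArg Prod.fst heq⟩
    obtain ⟨rfl, rfl⟩ := hpair
    cases b <;> cases c
    · rfl
    · -- b = false (SP), c = true (D)
      exfalso
      obtain ⟨-, hiS, hjS⟩ := Finset.mem_filter.mp (hEmemF i j h1) |>.2
      obtain ⟨-, hd⟩ := Finset.mem_filter.mp (hEmemT i j h2) |>.2
      have e1 : F ((i, j), false) = (i, j) := by simp [hFdef, hd.2.2.2]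
      have e2 : F ((i, j), true) = (j, i) := by simp [hFdef, hjS]
      rw [e1, e2] at heq
      have hij : i = j := congrArg Prod.fst heq
      exact lt_irrefl j (hij ▸ hlt1)
    · -- b = true (D), c = false (SP)
      exfalso
      obtain ⟨-, hiS, hjS⟩ := Finset.mem_filter.mp (hEmemF i j h2) |>.2
      obtain ⟨-, hd⟩ := Finset.mem_filter.mp (hEmemT i j h1) |>.2
      have e1 : F ((i, j), false) = (i, j) := by simp [hFdef, hd.2.2.2]
      have e2 : F ((i, j), true) = (j, i) := by simp [hFdef, hjS]
      rw [e1, e2] at heq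
      have hji : j = i := congrArg Prod.fst heq
      exact lt_irrefl i (hji ▸ hlt1)
    · rfl
  have hlow : doubleCount A + m.choose 2 ≤ T.card := by
    have hle : E.card ≤ T.card := by
      apply Finset.card_le_card_of_injOn F hmaps
      intro a ha b hb hab
      exact hinj a (Finset.mem_coe.mp ha) b (Finset.mem_coe.mp hb) hab
    rw [hEcard, hDcard, hSPcard] at hle
    exact hle
  have hZ : (doubleCount A : ℤ) + (m.choose 2 : ℤ) ≤ (T.card : ℤ) := by
    exact_mod_cast hlow
  linarith
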